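/- Let A ∈ ℝ^{m×n}, b ∈ ℝ^m, L ∈ ℝ^{s×n} with full column rank, {W_i}_{i=1}^{M} ⊂ ℝ^{m×ℓ} with Σ_{i=1}^{M} W_i W_iᵀ = I_m, and λ > 0. Suppose τ: ℕ → {1,…,M} is a sampling such that for every epoch j, {τ(k)}_{k=jM+1}^{(j+1)M} is a permutation of {1,…,M}. With y_0 = 0 and rrls iterates y_k = y_{k-1} − B_k A_{τ(k)}ᵀ(A_{τ(k)} y_{k-1} − b_{τ(k)}), B_k = (λLᵀL + Σ_{i=1}^{k} A_{τ(i)}ᵀA_{τ(i)})^{-1}, the iterate after the j-th epoch satisfies y_{jM} = (AᵀA + (λ/j) LᵀL)^{-1} Aᵀ b, i.e. y_{jM} is the Tikhonov solution with regularization parameter λ/j. -/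

import Mathlib

open Matrix Finset

lemma real_smul_posDef {n : ℕ} {Mx : Matrix (Fin n) (Fin n) ℝ} (hM : Mx.PosDef)
    {c : ℝ} (hc : 0 < c) : (c • Mx).PosDef := by
  refine Matrix.PosDef.of_dotProduct_mulVec_pos ?_ (fun x hx => ?_)
  · unfold Matrix.IsHermitian
    rw [conjTranspose_smul, hM.1.eq]
    simp
  · rw [smul_mulVec, dotProduct_smul, smul_eq_mul]
    exact mul_pos hc (hM.dotProduct_mulVec_pos hx)

lemma transpose_mul_self_posDef {s n : ℕ} (L : Matrix (Fin s) (Fin n) ℝ)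
    (hL : L.rank = n) : (Lᵀ * L).PosDef := by
  have hker : LinearMap.ker L.mulVecLin = ⊥ := by
    have h1 := LinearMap.finrank_range_add_finrank_ker L.mulVecLin
    rw [Matrix.rank] at hL
    rw [hL] at h1
    simp only [Module.finrank_fintype_fun_eq_card, Fintype.card_fin] at h1
    have : Module.finrank ℝ (LinearMap.ker L.mulVecLin) = 0 := by omega
    exact Submodule.finrank_eq_zero.mp this
  have hinj : Function.Injective L.mulVec := by
    have h := LinearMap.ker_eq_bot.mp hker
    intro x y hxy
    apply h
    simpa [Matrix.mulVecLin_apply] using hxy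
  refine Matrix.PosDef.of_dotProduct_mulVec_pos ?_ (fun x hx => ?_)
  · have := (Matrix.posSemidef_conjTranspose_mul_self L).1
    rwa [conjTranspose_eq_transpose_of_trivial] at this
  · have hx' : L.mulVec x ≠ 0 := by
      intro h
      apply hx
      apply hinj
      rw [h]
      simp [Matrix.mulVec_zero]
    have hstar : star x = x := by simp
    rw [hstar, ← Matrix.mulVec_mulVec, Matrix.dotProduct_mulVec, Matrix.vecMul_transpose]
    have := Matrix.dotProduct_self_star_pos_iff (v := L.mulVec x)
    simp only [star_trivial] at this
    exact this.mpr hx'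

lemma psd_transpose_mul_self {ℓ n : ℕ} (C : Matrix (Fin ℓ) (Fin n) ℝ) :
    (Cᵀ * C).PosSemidef := by
  have := Matrix.posSemidef_conjTranspose_mul_self C
  rwa [conjTranspose_eq_transpose_of_trivial] at this

lemma sum_mulVec' {n' m' : ℕ} {ι : Type*} (t : Finset ι)
    (f : ι → Matrix (Fin m') (Fin n') ℝ) (v : Fin n' → ℝ) :
    (∑ i ∈ t, f i).mulVec v = ∑ i ∈ t, (f i).mulVec v := by
  induction t using Finset.cons_induction with
  | empty => simp
  | cons a u ha ih => simp [Finset.sum_cons, Matrix.add_mulVec, ih]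

/-- under random cyclic sampling (each epoch is a permutation of the `M`
blocks), the rrls iterate after the `j`-th epoch is the Tikhonov solution with
regularization parameter `λ/j`. -/
theorem rrls_epoch_iterate
    {m n s ℓ M : ℕ} (hM : 0 < M)
    (A : Matrix (Fin m) (Fin n) ℝ) (b : Fin m → ℝ)
    (L : Matrix (Fin s) (Fin n) ℝ) (hL : L.rank = n)
    (W : Fin M → Matrix (Fin m) (Fin ℓ) ℝ)
    (hW : ∑ i, W i * (W i)ᵀ = (1 : Matrix (Fin m) (Fin m) ℝ))
    (lam : ℝ) (hlam : 0 < lam)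
    (τ : ℕ → Fin M)
    (hτ : ∀ j : ℕ, Function.Bijective (fun t : Fin M => τ (j * M + (t : ℕ))))
    (Ai : Fin M → Matrix (Fin ℓ) (Fin n) ℝ) (hAi : ∀ i, Ai i = (W i)ᵀ * A)
    (bi : Fin M → Fin ℓ → ℝ) (hbi : ∀ i, bi i = (W i)ᵀ.mulVec b)
    (B : ℕ → Matrix (Fin n) (Fin n) ℝ)
    (hB : ∀ j, B j = (lam • (Lᵀ * L) + ∑ i ∈ Finset.range j, (Ai (τ i))ᵀ * Ai (τ i))⁻¹)
    (y : ℕ → Fin n → ℝ) (hy0 : y 0 = 0)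
    (hy : ∀ k, y (k + 1) =
      y k - (B (k + 1)).mulVec ((Ai (τ k))ᵀ.mulVec ((Ai (τ k)).mulVec (y k) - bi (τ k)))) :
    ∀ j : ℕ, 0 < j →
      y (j * M) = (Aᵀ * A + (lam / (j : ℝ)) • (Lᵀ * L))⁻¹.mulVec (Aᵀ.mulVec b) := by
  have hLtL : (Lᵀ * L).PosDef := transpose_mul_self_posDef L hL
  set S : ℕ → Matrix (Fin n) (Fin n) ℝ :=
    fun k => ∑ i ∈ Finset.range k, (Ai (τ i))ᵀ * Ai (τ i) with hS
  set G : ℕ → Matrix (Fin n) (Fin n) ℝ := fun k => lam • (Lᵀ * L) + S k with hG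
  set c : ℕ → Fin n → ℝ :=
    fun k => ∑ i ∈ Finset.range k, (Ai (τ i))ᵀ.mulVec (bi (τ i)) with hc
  have hSpsd : ∀ k, (S k).PosSemidef := by
    intro k
    induction k with
    | zero =>
      have : S 0 = 0 := by simp [hS]
      rw [this]
      exact Matrix.PosSemidef.zero
    | succ k ih =>
      have : S (k + 1) = S k + (Ai (τ k))ᵀ * Ai (τ k) := by
        simp [hS, Finset.sum_range_succ]
      rw [this]
      exact ih.add (psd_transpose_mul_self (Ai (τ k)))
  have hGpd : ∀ k, (G k).PosDef :=
    fun k => (real_smul_posDef hLtL hlam).add_posSemidef (hSpsd k)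
  -- the key invariant
  have hinv : ∀ k, (G k).mulVec (y k) = c k := by
    intro k
    induction k with
    | zero => simp [hy0, hc]
    | succ k ih =>
      have hBk : B (k + 1) = (G (k + 1))⁻¹ := hB (k + 1)
      have : Invertible (G (k + 1)) := (hGpd (k + 1)).isUnit.invertible
      have hGk1 : G (k + 1) = G k + (Ai (τ k))ᵀ * Ai (τ k) := by
        simp only [hG, hS, Finset.sum_range_succ]
        abel
      have hc1 : c (k + 1) = c k + (Ai (τ k))ᵀ.mulVec (bi (τ k)) := by
        simp [hc, Finset.sum_range_succ]
      rw [hy k, hBk, Matrix.mulVec_sub, Matrix.mulVec_mulVec,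
        Matrix.mul_inv_of_invertible, Matrix.one_mulVec, hGk1,
        Matrix.add_mulVec, Matrix.mulVec_sub, ← Matrix.mulVec_mulVec,
        hc1, ← ih]
      abel
  -- epoch sums
  have hblocks : ∑ i : Fin M, (Ai i)ᵀ * Ai i = Aᵀ * A := by
    have h1 : Aᵀ * A = Aᵀ * (∑ i : Fin M, W i * (W i)ᵀ) * A := by
      rw [hW, Matrix.mul_one]
    rw [h1, Matrix.mul_sum, Matrix.sum_mul]
    refine Finset.sum_congr rfl fun i _ => ?_
    rw [hAi i, Matrix.transpose_mul, Matrix.transpose_transpose]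
    simp only [Matrix.mul_assoc]
  have hbvec : ∑ i : Fin M, (Ai i)ᵀ.mulVec (bi i) = Aᵀ.mulVec b := by
    have h1 : Aᵀ.mulVec b = (Aᵀ * (∑ i : Fin M, W i * (W i)ᵀ)).mulVec b := by
      rw [hW, Matrix.mul_one]
    rw [h1, Matrix.mul_sum, sum_mulVec']
    refine Finset.sum_congr rfl fun i _ => ?_
    rw [hAi i, hbi i, Matrix.transpose_mul, Matrix.transpose_transpose,
      Matrix.mulVec_mulVec, Matrix.mul_assoc]
  have hepochS : ∀ j : ℕ, S (j * M) = (j : ℝ) • (Aᵀ * A) := by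
    intro j
    induction j with
    | zero => simp [hS]
    | succ j ih =>
      have hJ : (j + 1) * M = j * M + M := by ring
      simp only [hS] at ih ⊢
      rw [hJ, Finset.sum_range_add, ih]
      have : ∑ i ∈ Finset.range M, (Ai (τ (j * M + i)))ᵀ * Ai (τ (j * M + i))
          = Aᵀ * A := by
        rw [← Fin.sum_univ_eq_sum_range (fun i => (Ai (τ (j * M + i)))ᵀ * Ai (τ (j * M + i))) M]
        rw [← hblocks]
        exact Fintype.sum_bijective _ (hτ j) _ _ (fun t => rfl)
      rw [this]
      push_cast
      rw [add_smul, one_smul]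
  have hepochc : ∀ j : ℕ, c (j * M) = (j : ℝ) • (Aᵀ.mulVec b) := by
    intro j
    induction j with
    | zero => simp [hc]
    | succ j ih =>
      have hJ : (j + 1) * M = j * M + M := by ring
      simp only [hc] at ih ⊢
      rw [hJ, Finset.sum_range_add, ih]
      have : ∑ i ∈ Finset.range M, (Ai (τ (j * M + i)))ᵀ.mulVec (bi (τ (j * M + i)))
          = Aᵀ.mulVec b := by
        rw [← Fin.sum_univ_eq_sum_range
          (fun i => (Ai (τ (j * M + i)))ᵀ.mulVec (bi (τ (j * M + i)))) M]
        rw [← hbvec]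
        exact Fintype.sum_bijective _ (hτ j) _ _ (fun t => rfl)
      rw [this]
      push_cast
      rw [add_smul, one_smul]
  -- conclusion
  intro j hj
  have hjne : (j : ℝ) ≠ 0 := Nat.cast_ne_zero.mpr hj.ne'
  set P : Matrix (Fin n) (Fin n) ℝ := Aᵀ * A + (lam / (j : ℝ)) • (Lᵀ * L) with hP
  have hPpd : P.PosDef := by
    have : (0 : ℝ) < lam / j := div_pos hlam (Nat.cast_pos.mpr hj)
    exact Matrix.PosDef.posSemidef_add (psd_transpose_mul_self A) (real_smul_posDef hLtL this)
  have hGP : G (j * M) = (j : ℝ) • P := by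
    simp only [hG]
    rw [hepochS j, hP, smul_add, smul_smul]
    rw [mul_div_cancel₀ _ hjne]
    abel
  have hkey : P.mulVec (y (j * M)) = Aᵀ.mulVec b := by
    have h1 := hinv (j * M)
    rw [hGP, hepochc j, smul_mulVec] at h1
    exact smul_right_injective _ hjne h1
  have : Invertible P := hPpd.isUnit.invertible
  exact (Matrix.inv_mulVec_eq_vec hkey.symm).symm
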